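/- Let α < 0, β ∈ ℝ, let ρ(s) = (1+s²)^{α/2−1} e^{β·arctan s} for s ∈ ℝ, and for l ∈ ℕ define Ψ_l(s) = (1/ρ(s)) · (d/ds)^l [(s²+1)^l ρ(s)]. Then for all natural numbers l ≠ l' with l < (1−α)/2 and l' < (1−α)/2, the function s ↦ Ψ_l(s) Ψ_{l'}(s) ρ(s) is integrable on ℝ and ∫_{−∞}^{∞} Ψ_l(s) Ψ_{l'}(s) ρ(s) ds = 0; that is, {Ψ_l : l < (1−α)/2} is a finite system of polynomials orthogonal with weight ρ on (−∞,∞). -/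

import Mathlib

open MeasureTheory Polynomial Filter Topology

namespace OrthAux

noncomputable def w (β γ : ℝ) (s : ℝ) : ℝ :=
  (1 + s ^ 2) ^ γ * Real.exp (β * Real.arctan s)

lemma one_add_sq_pos (s : ℝ) : (0:ℝ) < 1 + s ^ 2 := by positivity

lemma w_pos (β γ s : ℝ) : 0 < w β γ s := by
  unfold w
  positivity

lemma w_succ (β γ s : ℝ) : w β γ s = (1 + s ^ 2) * w β (γ - 1) s := by
  unfold w
  rw [Real.rpow_sub (one_add_sq_pos s), Real.rpow_one]
  field_simp

lemma hasDerivAt_w (β γ : ℝ) (s : ℝ) :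
    HasDerivAt (w β γ) ((2 * γ * s + β) * w β (γ - 1) s) s := by
  have h1 : HasDerivAt (fun s : ℝ => 1 + s ^ 2) (2 * s) s := by
    simpa using ((hasDerivAt_pow 2 s).const_add 1)
  have h2 : HasDerivAt (fun s : ℝ => (1 + s ^ 2) ^ γ)
      (2 * s * γ * (1 + s ^ 2) ^ (γ - 1)) s :=
    h1.rpow_const (Or.inl (one_add_sq_pos s).ne')
  have h3 : HasDerivAt (fun s : ℝ => Real.exp (β * Real.arctan s))
      (Real.exp (β * Real.arctan s) * (β * (1 / (1 + s ^ 2)))) s :=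
    ((Real.hasDerivAt_arctan s).const_mul β).exp
  have h4 := h2.mul h3
  convert h4 using 1
  · rfl
  · rfl
  · rfl
  have hne : (1 + s ^ 2) ≠ 0 := (one_add_sq_pos s).ne'
  unfold w
  rw [Real.rpow_sub (one_add_sq_pos s), Real.rpow_one]
  field_simp

/-- one differentiation step on the polynomial factor -/
noncomputable def step (β γ : ℝ) (P : Polynomial ℝ) : Polynomial ℝ :=
  Polynomial.derivative P * (X ^ 2 + 1) + P * (C (2 * γ) * X + C β)

lemma hasDerivAt_poly_w (β γ : ℝ) (P : Polynomial ℝ) (s : ℝ) :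
    HasDerivAt (fun t => P.eval t * w β γ t)
      ((step β γ P).eval s * w β (γ - 1) s) s := by
  have h := (P.hasDerivAt s).mul (hasDerivAt_w β γ s)
  convert h using 1
  · rfl
  · rfl
  · rfl
  rw [w_succ β γ s]
  simp [step]
  ring

lemma natDegree_step_le (β γ : ℝ) (P : Polynomial ℝ) (n : ℕ) (hP : P.natDegree ≤ n) :
    (step β γ P).natDegree ≤ n + 1 := by
  apply le_trans (Polynomial.natDegree_add_le _ _)
  apply max_le
  · by_cases hd : Polynomial.derivative P = 0
    · simp [hd]
    · have h1 : 1 ≤ P.natDegree := by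
        by_contra h
        push_neg at h
        interval_cases h' : P.natDegree
        · obtain ⟨a, rfl⟩ := Polynomial.natDegree_eq_zero.mp h'
          simp at hd
      apply le_trans (Polynomial.natDegree_mul_le)
      have h2 : (Polynomial.derivative P).natDegree ≤ P.natDegree - 1 :=
        Polynomial.natDegree_derivative_le P
      have h3 : (X ^ 2 + 1 : Polynomial ℝ).natDegree ≤ 2 := by
        compute_degree
      omega
  · apply le_trans (Polynomial.natDegree_mul_le)
    have h3 : (C (2 * γ) * X + C β : Polynomial ℝ).natDegree ≤ 1 := by
      compute_degree
    omega

noncomputable def q (β γ : ℝ) : ℕ → Polynomial ℝ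
  | 0 => 1
  | k + 1 => step β (γ - k) (q β γ k)

lemma q_natDegree_le (β γ : ℝ) (k : ℕ) : (q β γ k).natDegree ≤ k := by
  induction k with
  | zero => simp [q]
  | succ k ih => exact natDegree_step_le _ _ _ _ ih

lemma iteratedDeriv_w (β γ : ℝ) (k : ℕ) :
    iteratedDeriv k (w β γ) = fun s => (q β γ k).eval s * w β (γ - k) s := by
  induction k with
  | zero => simp [q]
  | succ k ih =>
    rw [iteratedDeriv_succ, ih]
    funext s
    have h := (hasDerivAt_poly_w β (γ - k) (q β γ k) s).deriv
    rw [h]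
    have : γ - k - 1 = γ - (k + 1 : ℕ) := by push_cast; ring
    rw [this]
    rfl

lemma eval_abs_le (P : Polynomial ℝ) (s : ℝ) :
    |P.eval s| ≤ (∑ i ∈ Finset.range (P.natDegree + 1), |P.coeff i|) * (1 + |s|) ^ P.natDegree := by
  rw [Polynomial.eval_eq_sum_range]
  calc |∑ i ∈ Finset.range (P.natDegree + 1), P.coeff i * s ^ i|
      ≤ ∑ i ∈ Finset.range (P.natDegree + 1), |P.coeff i * s ^ i| :=
        Finset.abs_sum_le_sum_abs _ _
    _ ≤ ∑ i ∈ Finset.range (P.natDegree + 1), |P.coeff i| * (1 + |s|) ^ P.natDegree := by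
        apply Finset.sum_le_sum
        intro i hi
        rw [abs_mul, abs_pow]
        apply mul_le_mul_of_nonneg_left _ (abs_nonneg _)
        calc |s| ^ i ≤ (1 + |s|) ^ i := by
              apply pow_le_pow_left₀ (abs_nonneg s)
              linarith [abs_nonneg s]
          _ ≤ (1 + |s|) ^ P.natDegree := by
              apply pow_le_pow_right₀ (by linarith [abs_nonneg s])
              exact Nat.lt_succ_iff.mp (Finset.mem_range.mp hi)
    _ = _ := by rw [← Finset.sum_mul]

noncomputable def pconst (P : Polynomial ℝ) : ℝ :=
  ∑ i ∈ Finset.range (P.natDegree + 1), |P.coeff i|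

lemma pconst_nonneg (P : Polynomial ℝ) : 0 ≤ pconst P :=
  Finset.sum_nonneg fun _ _ => abs_nonneg _

/-- main pointwise bound -/
lemma abs_poly_w_le (β δ : ℝ) (hδ : δ ≤ 0) (P : Polynomial ℝ) (s : ℝ) :
    |P.eval s * ((1 + s ^ 2) ^ δ * Real.exp (β * Real.arctan s))|
      ≤ (pconst P * (2 : ℝ) ^ (-δ) * Real.exp (|β| * (Real.pi / 2))) *
        (1 + |s|) ^ ((P.natDegree : ℝ) + 2 * δ) := by
  have hb : (0:ℝ) < 1 + |s| := by positivity
  have h1 : |P.eval s| ≤ pconst P * (1 + |s|) ^ ((P.natDegree : ℝ)) := by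
    rw [Real.rpow_natCast]
    exact eval_abs_le P s
  have h2 : (1 + s ^ 2 : ℝ) ^ δ ≤ (2 : ℝ) ^ (-δ) * (1 + |s|) ^ (2 * δ) := by
    have hle : (1 + |s|) ^ (2:ℕ) / 2 ≤ 1 + s ^ 2 := by
      have := sq_abs s
      nlinarith [sq_nonneg (1 - |s|), abs_nonneg s]
    have hpos : (0:ℝ) < (1 + |s|) ^ (2:ℕ) / 2 := by positivity
    calc (1 + s ^ 2 : ℝ) ^ δ ≤ ((1 + |s|) ^ (2:ℕ) / 2) ^ δ :=
          Real.rpow_le_rpow_of_nonpos hpos hle hδ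
      _ = (2 : ℝ) ^ (-δ) * (1 + |s|) ^ (2 * δ) := by
          rw [Real.div_rpow (by positivity) (by norm_num),
            ← Real.rpow_natCast (1 + |s|) 2, ← Real.rpow_mul hb.le,
            Real.rpow_neg (by norm_num)]
          push_cast
          rw [div_eq_mul_inv, mul_comm]
  have h3 : Real.exp (β * Real.arctan s) ≤ Real.exp (|β| * (Real.pi / 2)) := by
    apply Real.exp_le_exp.mpr
    calc β * Real.arctan s ≤ |β * Real.arctan s| := le_abs_self _
      _ = |β| * |Real.arctan s| := abs_mul _ _
      _ ≤ |β| * (Real.pi / 2) := by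
          apply mul_le_mul_of_nonneg_left _ (abs_nonneg β)
          rw [abs_le]
          constructor
          · linarith [Real.neg_pi_div_two_lt_arctan s]
          · linarith [Real.arctan_lt_pi_div_two s]
  have hwpos : (0:ℝ) < (1 + s ^ 2) ^ δ := Real.rpow_pos_of_pos (by positivity) δ
  rw [abs_mul, abs_mul, abs_of_pos hwpos, abs_of_pos (Real.exp_pos _)]
  calc |P.eval s| * ((1 + s ^ 2) ^ δ * Real.exp (β * Real.arctan s))
      ≤ (pconst P * (1 + |s|) ^ ((P.natDegree : ℝ))) *
        (((2 : ℝ) ^ (-δ) * (1 + |s|) ^ (2 * δ)) * Real.exp (|β| * (Real.pi / 2))) := by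
        apply mul_le_mul h1 _ (by positivity)
          (mul_nonneg (pconst_nonneg P) (by positivity))
        exact mul_le_mul h2 h3 (Real.exp_pos _).le (by positivity)
    _ = (pconst P * (2 : ℝ) ^ (-δ) * Real.exp (|β| * (Real.pi / 2))) *
        ((1 + |s|) ^ ((P.natDegree : ℝ)) * (1 + |s|) ^ (2 * δ)) := by ring
    _ = _ := by rw [← Real.rpow_add hb]

lemma continuous_poly_w (β δ : ℝ) (P : Polynomial ℝ) :
    Continuous (fun s => P.eval s * w β δ s) := by
  apply P.continuous.mul
  exact ((continuous_const.add (continuous_pow 2)).rpow_const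
    (fun s => Or.inl (one_add_sq_pos s).ne')).mul
    (Real.continuous_exp.comp (continuous_const.mul Real.continuous_arctan))

lemma integrable_poly_w (β δ : ℝ) (P : Polynomial ℝ)
    (h : (P.natDegree : ℝ) + 2 * δ < -1) :
    Integrable (fun s => P.eval s * w β δ s) := by
  have hd0 : (0:ℝ) ≤ (P.natDegree : ℝ) := Nat.cast_nonneg _
  have hδ : δ ≤ 0 := by nlinarith
  set r : ℝ := -((P.natDegree : ℝ) + 2 * δ) with hr
  have h1r : ((Module.finrank ℝ ℝ : ℕ) : ℝ) < r := by
    rw [Module.finrank_self]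
    simp only [Nat.cast_one, hr]
    linarith
  have base : Integrable (fun x : ℝ => (1 + ‖x‖) ^ (-r)) := integrable_one_add_norm h1r
  refine (base.const_mul (pconst P * (2:ℝ) ^ (-δ) * Real.exp (|β| * (Real.pi/2)))).mono'
    (continuous_poly_w β δ P).aestronglyMeasurable ?_
  filter_upwards with s
  rw [Real.norm_eq_abs, Real.norm_eq_abs]
  have hb := abs_poly_w_le β δ hδ P s
  rw [hr, neg_neg]
  exact hb

lemma tendsto_poly_w (β δ : ℝ) (P : Polynomial ℝ)
    (h : (P.natDegree : ℝ) + 2 * δ < 0) (F : Filter ℝ)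
    (hF : Tendsto (fun s : ℝ => |s|) F atTop) :
    Tendsto (fun s => P.eval s * w β δ s) F (𝓝 0) := by
  have hd0 : (0:ℝ) ≤ (P.natDegree : ℝ) := Nat.cast_nonneg _
  have hδ : δ ≤ 0 := by nlinarith
  set C : ℝ := pconst P * (2:ℝ) ^ (-δ) * Real.exp (|β| * (Real.pi/2)) with hC
  apply squeeze_zero_norm
    (a := fun s : ℝ => C * (1 + |s|) ^ ((P.natDegree : ℝ) + 2 * δ))
  · intro s
    rw [Real.norm_eq_abs]
    exact abs_poly_w_le β δ hδ P s
  · have h2 : Tendsto (fun s : ℝ => 1 + |s|) F atTop :=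
      tendsto_atTop_add_const_left _ _ hF
    have h3 : Tendsto (fun x : ℝ => x ^ ((P.natDegree : ℝ) + 2 * δ)) atTop (𝓝 0) := by
      have := tendsto_rpow_neg_atTop (y := -((P.natDegree : ℝ) + 2 * δ)) (by linarith)
      simpa using this
    have h4 := (h3.comp h2).const_mul C
    simpa using h4

lemma parts (β δ₀ : ℝ) : ∀ (m : ℕ) (R : Polynomial ℝ),
    ((R.natDegree : ℝ) + 2 * δ₀ - m < -1) → ((R.natDegree : ℝ) < m) →
    ∫ s : ℝ, R.eval s * iteratedDeriv m (w β δ₀) s = 0 := by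
  intro m
  induction m with
  | zero =>
    intro R h1 h2
    have : (0:ℝ) ≤ (R.natDegree : ℝ) := Nat.cast_nonneg _
    push_cast at h2
    linarith
  | succ m ih =>
    intro R h1 h2
    push_cast at h1 h2
    have hu : ∀ x : ℝ, HasDerivAt (fun t => R.eval t) ((Polynomial.derivative R).eval x) x :=
      fun x => R.hasDerivAt x
    have hq := iteratedDeriv_w β δ₀ m
    have hq' := iteratedDeriv_w β δ₀ (m + 1)
    have hcast : (((m + 1 : ℕ)) : ℝ) = (m : ℝ) + 1 := by push_cast; ring
    have hv : ∀ x : ℝ, HasDerivAt (iteratedDeriv m (w β δ₀))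
        (iteratedDeriv (m + 1) (w β δ₀) x) x := by
      intro x
      rw [hq]
      simp only [hq', hcast]
      have h := hasDerivAt_poly_w β (δ₀ - m) (q β δ₀ m) x
      have e1 : q β δ₀ (m + 1) = step β (δ₀ - m) (q β δ₀ m) := rfl
      have e2 : δ₀ - (m : ℝ) - 1 = δ₀ - ((m : ℝ) + 1) := by ring
      rw [e1, ← e2]
      exact h
    have huv' : Integrable (fun x : ℝ => R.eval x * iteratedDeriv (m + 1) (w β δ₀) x) := by
      simp only [hq', hcast]
      have heq : (fun x : ℝ => R.eval x * ((q β δ₀ (m + 1)).eval x * w β (δ₀ - ((m:ℝ) + 1)) x))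
          = fun x => (R * q β δ₀ (m + 1)).eval x * w β (δ₀ - ((m:ℝ) + 1)) x := by
        funext x; rw [Polynomial.eval_mul]; ring
      rw [heq]
      apply integrable_poly_w
      have hd : ((R * q β δ₀ (m + 1)).natDegree : ℝ) ≤ (R.natDegree : ℝ) + (m + 1) := by
        have := le_trans (Polynomial.natDegree_mul_le (p := R) (q := q β δ₀ (m + 1)))
          (add_le_add_right (q_natDegree_le β δ₀ (m + 1)) _)
        exact_mod_cast this
      linarith
    have hu'v : Integrable (fun x : ℝ =>
        (Polynomial.derivative R).eval x * iteratedDeriv m (w β δ₀) x) := by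
      by_cases hdR : Polynomial.derivative R = 0
      · simp [hdR]
      · have hR1 : 1 ≤ R.natDegree := by
          by_contra hcon
          push_neg at hcon
          interval_cases hh : R.natDegree
          · obtain ⟨a, rfl⟩ := Polynomial.natDegree_eq_zero.mp hh
            simp at hdR
        simp only [hq]
        have heq : (fun x : ℝ => (Polynomial.derivative R).eval x *
            ((q β δ₀ m).eval x * w β (δ₀ - (m:ℝ)) x))
            = fun x => (Polynomial.derivative R * q β δ₀ m).eval x * w β (δ₀ - (m:ℝ)) x := by
          funext x; rw [Polynomial.eval_mul]; ring
        rw [heq]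
        apply integrable_poly_w
        have hd : ((Polynomial.derivative R * q β δ₀ m).natDegree : ℝ)
            ≤ ((R.natDegree : ℝ) - 1) + m := by
          have hnat : (Polynomial.derivative R * q β δ₀ m).natDegree
              ≤ (R.natDegree - 1) + m :=
            le_trans Polynomial.natDegree_mul_le
              (add_le_add (Polynomial.natDegree_derivative_le R) (q_natDegree_le β δ₀ m))
          calc ((Polynomial.derivative R * q β δ₀ m).natDegree : ℝ)
              ≤ (((R.natDegree - 1) + m : ℕ) : ℝ) := by exact_mod_cast hnat
            _ = ((R.natDegree : ℝ) - 1) + m := by push_cast [Nat.cast_sub hR1]; ring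
        linarith
    have htends : ∀ F : Filter ℝ, Tendsto (fun s : ℝ => |s|) F atTop →
        Tendsto (fun x : ℝ => R.eval x * iteratedDeriv m (w β δ₀) x) F (𝓝 0) := by
      intro F hF
      simp only [hq]
      have heq : (fun x : ℝ => R.eval x * ((q β δ₀ m).eval x * w β (δ₀ - (m:ℝ)) x))
          = fun x => (R * q β δ₀ m).eval x * w β (δ₀ - (m:ℝ)) x := by
        funext x; rw [Polynomial.eval_mul]; ring
      rw [heq]
      apply tendsto_poly_w _ _ _ _ F hF
      have hd : ((R * q β δ₀ m).natDegree : ℝ) ≤ (R.natDegree : ℝ) + m := by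
        have := le_trans (Polynomial.natDegree_mul_le (p := R) (q := q β δ₀ m))
          (add_le_add_right (q_natDegree_le β δ₀ m) _)
        exact_mod_cast this
      linarith
    have h_bot : Tendsto ((fun x : ℝ => R.eval x) * iteratedDeriv m (w β δ₀)) atBot (𝓝 0) :=
      htends atBot (by simpa using tendsto_abs_atBot_atTop)
    have h_top : Tendsto ((fun x : ℝ => R.eval x) * iteratedDeriv m (w β δ₀)) atTop (𝓝 0) :=
      htends atTop (by simpa using tendsto_abs_atTop_atTop)
    have key := integral_mul_deriv_eq_deriv_mul (fun x _ => hu x) (fun x _ => hv x) huv' hu'v h_bot h_top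
    rw [key]
    by_cases hdR : Polynomial.derivative R = 0
    · simp [hdR]
    · have hR1 : 1 ≤ R.natDegree := by
        by_contra hcon
        push_neg at hcon
        interval_cases hh : R.natDegree
        · obtain ⟨a, rfl⟩ := Polynomial.natDegree_eq_zero.mp hh
          simp at hdR
      have hdeg : ((Polynomial.derivative R).natDegree : ℝ) ≤ (R.natDegree : ℝ) - 1 := by
        have := Polynomial.natDegree_derivative_le R
        calc ((Polynomial.derivative R).natDegree : ℝ) ≤ ((R.natDegree - 1 : ℕ) : ℝ) := by
              exact_mod_cast this
          _ = (R.natDegree : ℝ) - 1 := by push_cast [Nat.cast_sub hR1]; ring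
      have := ih (Polynomial.derivative R) (by linarith) (by linarith)
      rw [this]
      simp

lemma integral_zero_aux (β γ : ℝ) (a b : ℕ) (hb : (b:ℝ) < (a:ℝ))
    (hsum : (a:ℝ) + (b:ℝ) + 2 * γ < -1) :
    ∫ s : ℝ, (q β (γ + a) a).eval s * (q β (γ + b) b).eval s * w β γ s = 0 := by
  have hc : ((q β (γ + b) b).natDegree : ℝ) ≤ b := by
    exact_mod_cast q_natDegree_le β (γ + b) b
  have heq : (fun s : ℝ => (q β (γ + a) a).eval s * (q β (γ + b) b).eval s * w β γ s)
      = fun s => (q β (γ + b) b).eval s * iteratedDeriv a (w β (γ + a)) s := by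
    rw [iteratedDeriv_w]
    funext s
    have e : γ + (a:ℝ) - (a:ℝ) = γ := by ring
    rw [e]
    ring
  rw [heq]
  apply parts
  · linarith
  · linarith

end OrthAux

open OrthAux

/-- For `α < 0`, `β ∈ ℝ`, the weight
`ρ(s) = (1+s²)^{α/2-1} e^{β arctan s}` on `(-∞,∞)` (case `σ(s) = s²+1`)
and `Ψ_l(s) = (1/ρ(s)) (d/ds)^l [(s²+1)^l ρ(s)]`, for all `l ≠ l'` with
`l < (1-α)/2` and `l' < (1-α)/2` the function `s ↦ Ψ_l(s)Ψ_{l'}(s)ρ(s)` is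
integrable on ℝ with integral zero: the `Ψ_l`, `l < (1-α)/2`, form a finite
system of orthogonal polynomials with weight `ρ`. -/
theorem orthogonality_finite_system_sigma_s_sq_plus_one
    (α β : ℝ) (hα : α < 0)
    (ρ : ℝ → ℝ)
    (hρ : ∀ s : ℝ, ρ s = (1 + s ^ 2) ^ (α / 2 - 1) * Real.exp (β * Real.arctan s))
    (Ψ : ℕ → ℝ → ℝ)
    (hΨ : ∀ (l : ℕ) (s : ℝ),
      Ψ l s = (1 / ρ s) * iteratedDeriv l (fun t => (t ^ 2 + 1) ^ l * ρ t) s)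
    (l l' : ℕ) (hne : l ≠ l')
    (hl : (l : ℝ) < (1 - α) / 2) (hl' : (l' : ℝ) < (1 - α) / 2) :
    Integrable (fun s => Ψ l s * Ψ l' s * ρ s) ∧
      ∫ s : ℝ, Ψ l s * Ψ l' s * ρ s = 0 := by
  set γ : ℝ := α / 2 - 1 with hγ
  have hρw : ρ = w β γ := by
    funext s
    rw [hρ]
    rfl
  have hgl : ∀ k : ℕ, (fun t : ℝ => (t ^ 2 + 1) ^ k * ρ t) = w β (γ + k) := by
    intro k
    funext t
    rw [hρw]
    unfold w
    rw [show (t ^ 2 + 1 : ℝ) = 1 + t ^ 2 by ring, ← Real.rpow_natCast (1 + t ^ 2) k,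
      ← mul_assoc, ← Real.rpow_add (one_add_sq_pos t)]
    ring_nf
  have hΨpoly : ∀ (k : ℕ) (s : ℝ), Ψ k s = (q β (γ + k) k).eval s := by
    intro k s
    rw [hΨ, hgl k, iteratedDeriv_w]
    have e : γ + (k:ℝ) - (k:ℝ) = γ := by ring
    rw [e, hρw]
    have hne : w β γ s ≠ 0 := (w_pos β γ s).ne'
    field_simp
  have hint : (fun s : ℝ => Ψ l s * Ψ l' s * ρ s)
      = fun s => (q β (γ + l) l * q β (γ + l') l').eval s * w β γ s := by
    funext s
    rw [hΨpoly, hΨpoly, hρw, Polynomial.eval_mul]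
  have hsum : (l:ℝ) + (l':ℝ) + 2 * γ < -1 := by
    rw [hγ]; linarith
  constructor
  · rw [hint]
    apply integrable_poly_w
    have hd : ((q β (γ + l) l * q β (γ + l') l').natDegree : ℝ) ≤ (l:ℝ) + (l':ℝ) := by
      have := le_trans (Polynomial.natDegree_mul_le
        (p := q β (γ + l) l) (q := q β (γ + l') l'))
        (add_le_add (q_natDegree_le β (γ + l) l) (q_natDegree_le β (γ + l') l'))
      exact_mod_cast this
    linarith
  · rcases hne.lt_or_gt with hlt | hlt
    · -- l < l'
      have heq : (fun s : ℝ => Ψ l s * Ψ l' s * ρ s)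
          = fun s => (q β (γ + l') l').eval s * (q β (γ + l) l).eval s * w β γ s := by
        funext s
        rw [hΨpoly, hΨpoly, hρw]
        ring
      rw [heq]
      exact integral_zero_aux β γ l' l (by exact_mod_cast hlt) (by linarith)
    · -- l' < l
      have heq : (fun s : ℝ => Ψ l s * Ψ l' s * ρ s)
          = fun s => (q β (γ + l) l).eval s * (q β (γ + l') l').eval s * w β γ s := by
        funext s
        rw [hΨpoly, hΨpoly, hρw]
      rw [heq]
      exact integral_zero_aux β γ l l' (by exact_mod_cast hlt) (by linarith)
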